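/- For every p ∈ {1,…,6}, the standard edge subgroup G^p = ⟨⋃_{i∈α_p}( Ȳ_i ∪ ⋃_{j∈α_{τ(p)}} Z̄^{j*}_{i,j} )⟩ of Ker(Φ), where τ(1) = {2,3,4}, τ(2) = {1,5,6}, τ(3) = {4,5,6}, τ(4) = {1,2,3}, τ(5) = {1,2,6}, τ(6) = {3,4,5}, is isomorphic, as a group, to ∏_{i∈α_p} G_i. -/

import Mathlib

namespace SB

/-- `cc n p` is the 0-based boundary of the `p`-th label sequence:
`cc n p = ⌈p·n/3⌉` for `p ≤ 3`, and `cc n p = n + ⌈(p-3)·n/3⌉` for `p ≥ 3`. -/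
def cc (n p : ℕ) : ℕ := if p < 3 then (p * n + 2) / 3 else n + ((p - 3) * n + 2) / 3

/-- The 0-based label sequence `α_{p+1}` (paper's `α_1,…,α_6` for `p = 0,…,5`)
as a finite set of coordinates in `Fin (2n)`. -/
def alphaF (n p : ℕ) : Finset (Fin (2 * n)) :=
  Finset.univ.filter (fun x => cc n p ≤ x.val ∧ x.val < cc n (p + 1))

/-- The 0-based label sequence `α_{t+1}` (for `t < 3`) as a finite set of
indices in `Fin n` (indexing the factors `A_j`). -/
def alphaN (n t : ℕ) : Finset (Fin n) :=
  Finset.univ.filter (fun x => cc n t ≤ x.val ∧ x.val < cc n (t + 1))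

/-- Reduction of a natural number modulo `2n`, as an element of `Fin (2n)`. -/
def idx {n : ℕ} (hn : 0 < n) (k : ℕ) : Fin (2 * n) := ⟨k % (2 * n), Nat.mod_lt _ (by omega)⟩

/-- Reduction of a natural number modulo `n`, as an element of `Fin n`
(this implements the paper's `j*`). -/
def idxN {n : ℕ} (hn : 0 < n) (k : ℕ) : Fin n := ⟨k % n, Nat.mod_lt _ hn⟩

/-- The set `Ȳ_i` of vectorized kernel generators: `y ∈ Y i` placed in
coordinate `i` with identity elsewhere. -/
def Ybar {n : ℕ} {G : Fin (2 * n) → Type} [∀ i, Group (G i)]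
    (Y : ∀ i, Set (G i)) (i : Fin (2 * n)) : Set (∀ i', G i') :=
  Pi.mulSingle i '' (Y i)

/-- The set `Z̄^j_{i,k}` of vectorized section generators: for `b ∈ A j`, the
element with `s j i b` in coordinate `i`, `s j k b⁻¹` in coordinate `k`, and
identity elsewhere. -/
def Zbar {n : ℕ} {A : Fin n → Type} [∀ j, CommGroup (A j)]
    {G : Fin (2 * n) → Type} [∀ i, Group (G i)]
    (s : ∀ (j : Fin n) (i : Fin (2 * n)), A j →* G i)
    (j : Fin n) (i k : Fin (2 * n)) : Set (∀ i', G i') :=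
  Set.range (fun b : A j => Pi.mulSingle i (s j i b) * Pi.mulSingle k (s j k b⁻¹))

/-- The index sets τ(p) (0-based): for the standard edge subgroup `G^{p+1}`,
the section generators target the coordinates in `α_{τ(p)}`. -/
def tau : ℕ → Finset ℕ
  | 0 => {1, 2, 3}
  | 1 => {0, 4, 5}
  | 2 => {3, 4, 5}
  | 3 => {0, 1, 2}
  | 4 => {0, 1, 5}
  | _ => {2, 3, 4}

/-! ### Auxiliary lemmas -/


lemma aux_bij {n : ℕ} {A : Fin n → Type} [∀ j, CommGroup (A j)]
    [∀ j, Module.Finite ℤ (Additive (A j))]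
    (f : (∀ j, A j) →* (∀ j, A j)) (hf : Function.Surjective f) :
    Function.Bijective f := by
  refine ⟨?_, hf⟩
  let f' : (∀ j, Additive (A j)) →+ (∀ j, Additive (A j)) :=
    { toFun := fun a => fun j => Additive.ofMul (f (fun k => Additive.toMul (a k)) j)
      map_zero' := by funext j; exact congrArg Additive.ofMul (congrFun f.map_one j)
      map_add' := fun x y => by
        funext j; exact congrArg Additive.ofMul (congrFun (f.map_mul _ _) j) }
  have hf' : Function.Surjective f'.toIntLinearMap := by
    intro b
    obtain ⟨a, ha⟩ := hf (fun j => Additive.toMul (b j))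
    refine ⟨fun j => Additive.ofMul (a j), ?_⟩
    funext j
    exact congrArg Additive.ofMul (congrFun ha j)
  have hinj := OrzechProperty.injective_of_surjective_endomorphism f'.toIntLinearMap hf'
  intro x y hxy
  have : f'.toIntLinearMap (fun j => Additive.ofMul (x j)) =
      f'.toIntLinearMap (fun j => Additive.ofMul (y j)) := by
    funext j
    exact congrArg Additive.ofMul (congrFun hxy j)
  have := hinj this
  funext j
  exact congrArg Additive.toMul (congrFun this j)

lemma L1 {n p : ℕ} (hn : 3 ≤ n) (hp : p < 6) {x : Fin (2*n)} (hx : x ∈ alphaF n p) :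
    x ∉ (tau p).biUnion (fun q => alphaF n q) := by
  obtain ⟨x, hx2⟩ := x
  interval_cases p <;> simp [tau, alphaF, cc] at hx ⊢ <;> omega

lemma modtwo {n a : ℕ} (h : a < 2*n) : a % n = if a < n then a else a - n := by
  split_ifs with h'
  · exact Nat.mod_eq_of_lt h'
  · rw [Nat.mod_eq_sub_mod (le_of_not_gt h'), Nat.mod_eq_of_lt (by omega)]

set_option maxHeartbeats 2000000 in
lemma L2 {n p : ℕ} (hn : 3 ≤ n) (hp : p < 6) {x y : Fin (2*n)}
    (hx : x ∈ (tau p).biUnion (fun q => alphaF n q))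
    (hy : y ∈ (tau p).biUnion (fun q => alphaF n q))
    (h : x.1 % n = y.1 % n) : x = y := by
  have hx2 := x.isLt
  have hy2 := y.isLt
  apply Fin.ext
  rw [modtwo hx2, modtwo hy2] at h
  have hxy : x.1 = y.1 ∨ x.1 + n = y.1 ∨ y.1 + n = x.1 := by split_ifs at h <;> omega
  rcases hxy with h' | h' | h'
  · exact h'
  all_goals interval_cases p <;> simp [tau, alphaF, cc] at hx hy <;> omega

lemma L3 {n p : ℕ} (hn : 3 ≤ n) (hp : p < 6) (r : Fin n) :
    ∃ x ∈ (tau p).biUnion (fun q => alphaF n q), x.1 % n = r.1 := by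
  obtain ⟨r, hr⟩ := r
  by_cases h : (⟨r, by omega⟩ : Fin (2*n)) ∈ (tau p).biUnion (fun q => alphaF n q)
  · exact ⟨_, h, by simpa using Nat.mod_eq_of_lt hr⟩
  · refine ⟨⟨r+n, by omega⟩, ?_, by simp [Nat.add_mod_right, Nat.mod_eq_of_lt hr]⟩
    revert h
    interval_cases p <;> simp [tau, alphaF, cc] <;> omega

/-- The endomorphism `f_i` of `∏ A j` induced by the sections at coordinate `i`. -/
def Fh {n : ℕ} {A : Fin n → Type} [∀ j, CommGroup (A j)] {Gi : Type} [Group Gi]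
    (φi : Gi →* ∀ j, A j) (si : ∀ j : Fin n, A j →* Gi) : (∀ j, A j) →* (∀ j, A j) :=
  MonoidHom.mk' (fun a => ∏ j, φi (si j (a j))) (fun a b => by
    rw [← Finset.prod_mul_distrib]
    exact Finset.prod_congr rfl fun j _ => by rw [Pi.mul_apply, map_mul, map_mul])

lemma Fh_single {n : ℕ} {A : Fin n → Type} [∀ j, CommGroup (A j)] {Gi : Type} [Group Gi]
    (φi : Gi →* ∀ j, A j) (si : ∀ j : Fin n, A j →* Gi) (j : Fin n) (b : A j) :
    Fh φi si (Pi.mulSingle j b) = φi (si j b) := by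
  show (∏ j', φi (si j' (Pi.mulSingle j b j'))) = φi (si j b)
  refine (Finset.prod_eq_single j (fun j' _ hne => ?_) (by simp)).trans ?_
  · rw [Pi.mulSingle_eq_of_ne hne, map_one, map_one]
  · rw [Pi.mulSingle_eq_same]

lemma Fh_surj {n : ℕ} {A : Fin n → Type} [∀ j, CommGroup (A j)] {Gi : Type} [Group Gi]
    (φi : Gi →* ∀ j, A j) (si : ∀ j : Fin n, A j →* Gi) (Yi : Set Gi)
    (hsur : Function.Surjective φi)
    (hgen : Subgroup.closure (Yi ∪ ⋃ j, Set.range (si j)) = ⊤)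
    (hker : ∀ y ∈ Yi, φi y = 1) :
    Function.Surjective (Fh φi si) := by
  intro x
  obtain ⟨g, rfl⟩ := hsur x
  have hg : g ∈ Subgroup.closure (Yi ∪ ⋃ j, Set.range (si j)) := hgen ▸ Subgroup.mem_top g
  have : φi g ∈ (Fh φi si).range := by
    induction hg using Subgroup.closure_induction with
    | mem z hz =>
      rcases hz with hz | hz
      · rw [hker z hz]; exact one_mem _
      · obtain ⟨j, b, rfl⟩ := Set.mem_iUnion.mp hz
        exact ⟨Pi.mulSingle j b, Fh_single φi si j b⟩
    | one => rw [map_one]; exact one_mem _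
    | mul x y hx hy ihx ihy => rw [map_mul]; exact mul_mem ihx ihy
    | inv x hx ih => rw [map_inv]; exact inv_mem ih
  exact this

/-- The finite product of homomorphisms into a commutative group. -/
def Ch {ι : Type} [Fintype ι] {G : ι → Type} [∀ i, Group (G i)] {M : Type} [CommGroup M]
    (ψ : ∀ i, G i →* M) : (∀ i, G i) →* M :=
  MonoidHom.mk' (fun g => ∏ i, ψ i (g i)) (fun a b => by
    rw [← Finset.prod_mul_distrib]
    exact Finset.prod_congr rfl fun i _ => by rw [Pi.mul_apply, map_mul])

lemma Ch_single {ι : Type} [Fintype ι] [DecidableEq ι] {G : ι → Type} [∀ i, Group (G i)]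
    {M : Type} [CommGroup M] (ψ : ∀ i, G i →* M) (i : ι) (v : G i) :
    Ch ψ (Pi.mulSingle i v) = ψ i v := by
  show (∏ i', ψ i' (Pi.mulSingle i v i')) = ψ i v
  refine (Finset.prod_eq_single i (fun i' _ hne => ?_) (by simp)).trans ?_
  · rw [Pi.mulSingle_eq_of_ne hne, map_one]
  · rw [Pi.mulSingle_eq_same]

/-- The coordinate formula for the embedding `Θ`. -/
def theta {n : ℕ} (hn0 : 0 < n) {A : Fin n → Type} [∀ j, CommGroup (A j)]
    {G : Fin (2 * n) → Type} [∀ i, Group (G i)] (p : ℕ)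
    (s : ∀ (j : Fin n) (i : Fin (2 * n)), A j →* G i)
    (C : (∀ i : ↥(alphaF n p), G i.1) →* (∀ j, A j))
    (g : ∀ i : ↥(alphaF n p), G i.1) (i' : Fin (2 * n)) : G i' :=
  if h : i' ∈ alphaF n p then g ⟨i', h⟩
  else if i' ∈ (tau p).biUnion (fun q => alphaF n q) then
    s (idxN hn0 i'.1) i' ((C g (idxN hn0 i'.1))⁻¹)
  else 1

lemma theta_pos {n : ℕ} (hn0 : 0 < n) {A : Fin n → Type} [∀ j, CommGroup (A j)]
    {G : Fin (2 * n) → Type} [∀ i, Group (G i)] (p : ℕ)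
    (s : ∀ (j : Fin n) (i : Fin (2 * n)), A j →* G i)
    (C : (∀ i : ↥(alphaF n p), G i.1) →* (∀ j, A j))
    (g : ∀ i : ↥(alphaF n p), G i.1) {i' : Fin (2 * n)} (h : i' ∈ alphaF n p) :
    theta hn0 p s C g i' = g ⟨i', h⟩ := dif_pos h

lemma theta_mul {n : ℕ} (hn0 : 0 < n) {A : Fin n → Type} [∀ j, CommGroup (A j)]
    {G : Fin (2 * n) → Type} [∀ i, Group (G i)] (p : ℕ)
    (s : ∀ (j : Fin n) (i : Fin (2 * n)), A j →* G i)
    (C : (∀ i : ↥(alphaF n p), G i.1) →* (∀ j, A j))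
    (g h : ∀ i : ↥(alphaF n p), G i.1) :
    theta hn0 p s C (g * h) = theta hn0 p s C g * theta hn0 p s C h := by
  funext i'
  rw [Pi.mul_apply]
  unfold theta
  split_ifs with h1 h2
  · rfl
  · rw [map_mul, Pi.mul_apply, mul_inv, map_mul]
  · rw [one_mul]


set_option maxHeartbeats 1000000 in
theorem stmt_11
    (n : ℕ) (hn : 3 ≤ n)
    (A : Fin n → Type) [∀ j, CommGroup (A j)] [∀ j, Nontrivial (A j)]
    [∀ j, Module.Free ℤ (Additive (A j))] [∀ j, Module.Finite ℤ (Additive (A j))]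
    (G : Fin (2 * n) → Type) [∀ i, Group (G i)]
    (φ : ∀ i, G i →* (∀ j, A j)) (hφ : ∀ i, Function.Surjective (φ i))
    (s : ∀ (j : Fin n) (i : Fin (2 * n)), A j →* G i)
    (hs : ∀ j i a, φ i (s j i a) j = a)
    (Φ : (∀ i, G i) →* (∀ j, A j)) (hΦ : ∀ g, Φ g = ∏ i, φ i (g i))
    (Y : ∀ i, Set (G i)) (hYfin : ∀ i, (Y i).Finite)
    (hYker : ∀ i, ∀ y ∈ Y i, φ i y = 1)
    (hYgen : ∀ i, Subgroup.closure (Y i ∪ ⋃ j, Set.range (s j i)) = ⊤)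
    (p : ℕ) (hp : p < 6) :
    Nonempty
      (↥(Subgroup.closure (⋃ i ∈ alphaF n p,
            (Ybar Y i ∪ ⋃ j ∈ (tau p).biUnion (fun q => alphaF n q),
              Zbar s (idxN (by omega : 0 < n) j.val) i j)))
        ≃* (∀ i : ↥(alphaF n p), G i.1)) := by
  classical
  have hn0 : 0 < n := by omega
  -- the bijective endomorphisms `f_i`
  have hbij : ∀ i : Fin (2*n), Function.Bijective (Fh (φ i) (fun j => s j i)) := fun i =>
    aux_bij _ (Fh_surj (φ i) (fun j => s j i) (Y i) (hφ i) (hYgen i) (hYker i))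
  let E : ∀ i : Fin (2*n), (∀ j, A j) ≃* (∀ j, A j) := fun i =>
    MulEquiv.ofBijective _ (hbij i)
  -- the correction homomorphism
  let Cmap : (∀ i : ↥(alphaF n p), G i.1) →* (∀ j, A j) :=
    Ch (fun i : ↥(alphaF n p) => ((E i.1).symm.toMonoidHom.comp (φ i.1)))
  have hCsingle : ∀ (i : ↥(alphaF n p)) (v : G i.1),
      Cmap (Pi.mulSingle i v) = (E i.1).symm (φ i.1 v) := fun i v =>
    Ch_single (fun i : ↥(alphaF n p) => ((E i.1).symm.toMonoidHom.comp (φ i.1))) i v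
  have hCB : ∀ (i : ↥(alphaF n p)) (j : Fin n) (b : A j),
      Cmap (Pi.mulSingle i (s j i.1 b)) = Pi.mulSingle j b := by
    intro i j b
    rw [hCsingle, MulEquiv.symm_apply_eq]
    exact (Fh_single (φ i.1) (fun j' => s j' i.1) j b).symm
  -- the embedding Θ
  let Θ : (∀ i : ↥(alphaF n p), G i.1) →* (∀ i', G i') :=
    MonoidHom.mk' (theta hn0 p s Cmap) (theta_mul hn0 p s Cmap)
  have hΘinj : Function.Injective Θ := by
    intro a b hab
    funext i
    have h : theta hn0 p s Cmap a i.1 = theta hn0 p s Cmap b i.1 := congrFun hab i.1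
    rw [theta_pos hn0 p s Cmap a i.2, theta_pos hn0 p s Cmap b i.2] at h
    exact h
  -- computation A
  have compA : ∀ (i : ↥(alphaF n p)) (y : G i.1), φ i.1 y = 1 →
      Θ (Pi.mulSingle i y) = Pi.mulSingle i.1 y := by
    intro i y hy
    have hC : Cmap (Pi.mulSingle i y) = 1 := by
      rw [hCsingle, hy, map_one]
    funext i'
    show theta hn0 p s Cmap _ i' = _
    unfold theta
    split_ifs with h1 h2
    · by_cases h2 : i' = i.1
      · subst h2
        conv_rhs => rw [Pi.mulSingle_eq_same]
        exact Pi.mulSingle_eq_same (M := fun i : ↥(alphaF n p) => G i.1) i y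
      · rw [Pi.mulSingle_eq_of_ne (fun hc => h2 (congrArg Subtype.val hc)),
          Pi.mulSingle_eq_of_ne h2]
    · have hne : i' ≠ i.1 := fun hc => h1 (hc ▸ i.2)
      rw [hC, Pi.mulSingle_eq_of_ne hne, Pi.one_apply, inv_one, map_one]
    · have hne : i' ≠ i.1 := fun hc => h1 (hc ▸ i.2)
      rw [Pi.mulSingle_eq_of_ne hne]
  -- computation B
  have compB : ∀ (i : ↥(alphaF n p)) (j : Fin (2*n))
      (hj : j ∈ (tau p).biUnion (fun q => alphaF n q)) (b : A (idxN hn0 j.1)),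
      Θ (Pi.mulSingle i (s (idxN hn0 j.1) i.1 b)) =
        Pi.mulSingle i.1 (s (idxN hn0 j.1) i.1 b) * Pi.mulSingle j (s (idxN hn0 j.1) j b⁻¹) := by
    intro i j hj b
    have hC := hCB i (idxN hn0 j.1) b
    have hdisj : j ∉ alphaF n p := fun hc => (L1 hn hp hc) hj
    funext i'
    show theta hn0 p s Cmap _ i' = _
    rw [Pi.mul_apply]
    unfold theta
    split_ifs with h1 h2
    · have hij : i' ≠ j := fun hc => hdisj (hc ▸ h1)
      rw [Pi.mulSingle_eq_of_ne hij, mul_one]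
      by_cases h3 : i' = i.1
      · subst h3
        conv_rhs => rw [Pi.mulSingle_eq_same]
        exact Pi.mulSingle_eq_same (M := fun i : ↥(alphaF n p) => G i.1) i _
      · rw [Pi.mulSingle_eq_of_ne (fun hc => h3 (congrArg Subtype.val hc)),
          Pi.mulSingle_eq_of_ne h3]
    · have hii : i' ≠ i.1 := fun hc => h1 (hc ▸ i.2)
      rw [Pi.mulSingle_eq_of_ne hii, one_mul, hC]
      by_cases h3 : i' = j
      · subst h3
        rw [Pi.mulSingle_eq_same, Pi.mulSingle_eq_same]
      · have hne : idxN hn0 i'.1 ≠ idxN hn0 j.1 :=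
          fun hc => h3 (L2 hn hp h2 hj (congrArg Fin.val hc))
        rw [Pi.mulSingle_eq_of_ne hne, inv_one, map_one, Pi.mulSingle_eq_of_ne h3]
    · have hii : i' ≠ i.1 := fun hc => h1 (hc ▸ i.2)
      have hij : i' ≠ j := fun hc => h2 (hc ▸ hj)
      rw [Pi.mulSingle_eq_of_ne hii, Pi.mulSingle_eq_of_ne hij, one_mul]
  -- generating set of the domain
  have hXtop : Subgroup.closure
      (⋃ i : ↥(alphaF n p), Pi.mulSingle i '' (Y i.1 ∪ ⋃ j, Set.range (s j i.1))) = ⊤ := by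
    rw [eq_top_iff]
    intro g _
    rw [← Finset.noncommProd_mulSingle g]
    refine Subgroup.noncommProd_mem _ _ fun i _ => ?_
    have hgi : g i ∈ Subgroup.closure (Y i.1 ∪ ⋃ j, Set.range (s j i.1)) :=
      (hYgen i.1) ▸ Subgroup.mem_top (g i)
    have h2 : Pi.mulSingle i (g i) ∈
        Subgroup.map (MonoidHom.mulSingle (fun i : ↥(alphaF n p) => G i.1) i)
          (Subgroup.closure (Y i.1 ∪ ⋃ j, Set.range (s j i.1))) := ⟨g i, hgi, rfl⟩
    rw [MonoidHom.map_closure] at h2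
    refine Subgroup.closure_mono ?_ h2
    intro x hx
    exact Set.mem_iUnion.mpr ⟨i, hx⟩
  -- identification of the range
  have hrange : Θ.range = Subgroup.closure (⋃ i ∈ alphaF n p,
      (Ybar Y i ∪ ⋃ j ∈ (tau p).biUnion (fun q => alphaF n q),
        Zbar s (idxN (by omega : 0 < n) j.val) i j)) := by
    apply le_antisymm
    · rintro x ⟨g, rfl⟩
      have hg : g ∈ Subgroup.closure
          (⋃ i : ↥(alphaF n p), Pi.mulSingle i '' (Y i.1 ∪ ⋃ j, Set.range (s j i.1))) :=
        hXtop ▸ Subgroup.mem_top g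
      induction hg using Subgroup.closure_induction with
      | mem z hz =>
        obtain ⟨i, hzi⟩ := Set.mem_iUnion.mp hz
        obtain ⟨v, hv, rfl⟩ := hzi
        rcases hv with hv | hv
        · rw [compA i v (hYker i.1 v hv)]
          apply Subgroup.subset_closure
          exact Set.mem_iUnion₂.mpr ⟨i.1, i.2, Or.inl ⟨v, hv, rfl⟩⟩
        · obtain ⟨j', hv⟩ := Set.mem_iUnion.mp hv
          obtain ⟨b, rfl⟩ := hv
          obtain ⟨jj, hjj, hmod⟩ := L3 hn hp j'
          have hj' : idxN hn0 jj.1 = j' := Fin.ext hmod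
          subst hj'
          rw [compB i jj hjj b]
          apply Subgroup.subset_closure
          exact Set.mem_iUnion₂.mpr ⟨i.1, i.2,
            Or.inr (Set.mem_iUnion₂.mpr ⟨jj, hjj, ⟨b, rfl⟩⟩)⟩
      | one => rw [map_one]; exact one_mem _
      | mul x y hx hy ihx ihy => rw [map_mul]; exact mul_mem ihx ihy
      | inv x hx ih => rw [map_inv]; exact inv_mem ih
    · rw [Subgroup.closure_le]
      rintro x hx
      obtain ⟨i, hi, hx⟩ := Set.mem_iUnion₂.mp hx
      rcases hx with hx | hx
      · obtain ⟨y, hy, rfl⟩ := hx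
        exact ⟨Pi.mulSingle ⟨i, hi⟩ y, compA ⟨i, hi⟩ y (hYker i y hy)⟩
      · obtain ⟨j, hj, hx⟩ := Set.mem_iUnion₂.mp hx
        obtain ⟨b, rfl⟩ := hx
        exact ⟨Pi.mulSingle ⟨i, hi⟩ (s (idxN hn0 j.1) i b), compB ⟨i, hi⟩ j hj b⟩
  exact ⟨(MulEquiv.subgroupCongr hrange.symm).trans (MonoidHom.ofInjective hΘinj).symm⟩

end SB
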